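/- Framed bicategories (fibrant double categories) correspond exactly to (Set,Set)-enriched double categories: if 𝔼 : 𝕍×𝕍 → Set is a lax functor into the double category of sets (so squares over (f,g) are given by a function 𝔼(f,g) : 𝔼(X,Y) → 𝔼(X',Y') rather than a relation or span), with compatible units and composition, then the Grothendieck construction ∫𝔼 yields a double category in which every vertical morphism f : X → Y has a companion and a conjoint, i.e. ∫𝔼 is a framed bicategory. -/

import Mathlib

universe u

/-- The data of a (strict) double category: a vertical category, horizontal
morphisms, squares, identity squares, vertical and horizontal composition of
squares, and unit squares on vertical morphisms. -/
structure DoubleCatData : Type (u + 1) where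
  Obj : Type u
  Ver : Obj → Obj → Type u
  vid : ∀ X, Ver X X
  vcomp : ∀ {X Y Z}, Ver X Y → Ver Y Z → Ver X Z
  Hor : Obj → Obj → Type u
  hid : ∀ X, Hor X X
  hcomp : ∀ {X Y Z}, Hor X Y → Hor Y Z → Hor X Z
  Sq : ∀ {X Y X' Y'}, Hor X Y → Ver X X' → Ver Y Y' → Hor X' Y' → Type u
  sqId : ∀ {X Y} (u : Hor X Y), Sq u (vid X) (vid Y) u
  sqVComp : ∀ {X Y X' Y' X'' Y''} {u : Hor X Y} {u' : Hor X' Y'} {u'' : Hor X'' Y''}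
      {f : Ver X X'} {g : Ver Y Y'} {f' : Ver X' X''} {g' : Ver Y' Y''},
      Sq u f g u' → Sq u' f' g' u'' → Sq u (vcomp f f') (vcomp g g') u''
  sqHComp : ∀ {X Y Z X' Y' Z'} {u : Hor X Y} {v : Hor Y Z} {u' : Hor X' Y'} {v' : Hor Y' Z'}
      {f : Ver X X'} {g : Ver Y Y'} {h : Ver Z Z'},
      Sq u f g u' → Sq v g h v' → Sq (hcomp u v) f h (hcomp u' v')
  sqUId : ∀ {X X'} (f : Ver X X'), Sq (hid X) f f (hid X')

/-- The axioms of a strict double category. -/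
structure IsStrictDoubleCat (D : DoubleCatData.{u}) : Prop where
  vid_comp : ∀ {X Y} (f : D.Ver X Y), D.vcomp (D.vid X) f = f
  vcomp_id : ∀ {X Y} (f : D.Ver X Y), D.vcomp f (D.vid Y) = f
  vassoc : ∀ {W X Y Z} (f : D.Ver W X) (g : D.Ver X Y) (h : D.Ver Y Z),
    D.vcomp (D.vcomp f g) h = D.vcomp f (D.vcomp g h)
  hid_comp : ∀ {X Y} (u : D.Hor X Y), D.hcomp (D.hid X) u = u
  hcomp_id : ∀ {X Y} (u : D.Hor X Y), D.hcomp u (D.hid Y) = u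
  hassoc : ∀ {W X Y Z} (u : D.Hor W X) (v : D.Hor X Y) (w : D.Hor Y Z),
    D.hcomp (D.hcomp u v) w = D.hcomp u (D.hcomp v w)
  sq_id_vcomp : ∀ {X Y X' Y'} {u : D.Hor X Y} {u' : D.Hor X' Y'}
    {f : D.Ver X X'} {g : D.Ver Y Y'} (φ : D.Sq u f g u'),
    HEq (D.sqVComp (D.sqId u) φ) φ
  sq_vcomp_id : ∀ {X Y X' Y'} {u : D.Hor X Y} {u' : D.Hor X' Y'}
    {f : D.Ver X X'} {g : D.Ver Y Y'} (φ : D.Sq u f g u'),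
    HEq (D.sqVComp φ (D.sqId u')) φ
  sq_vassoc : ∀ {X₁ Y₁ X₂ Y₂ X₃ Y₃ X₄ Y₄}
    {u₁ : D.Hor X₁ Y₁} {u₂ : D.Hor X₂ Y₂} {u₃ : D.Hor X₃ Y₃} {u₄ : D.Hor X₄ Y₄}
    {f₁ : D.Ver X₁ X₂} {g₁ : D.Ver Y₁ Y₂} {f₂ : D.Ver X₂ X₃} {g₂ : D.Ver Y₂ Y₃}
    {f₃ : D.Ver X₃ X₄} {g₃ : D.Ver Y₃ Y₄}
    (φ : D.Sq u₁ f₁ g₁ u₂) (ψ : D.Sq u₂ f₂ g₂ u₃) (χ : D.Sq u₃ f₃ g₃ u₄),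
    HEq (D.sqVComp (D.sqVComp φ ψ) χ) (D.sqVComp φ (D.sqVComp ψ χ))
  sq_hid_comp : ∀ {X Y X' Y'} {u : D.Hor X Y} {u' : D.Hor X' Y'}
    {f : D.Ver X X'} {g : D.Ver Y Y'} (φ : D.Sq u f g u'),
    HEq (D.sqHComp (D.sqUId f) φ) φ
  sq_hcomp_id : ∀ {X Y X' Y'} {u : D.Hor X Y} {u' : D.Hor X' Y'}
    {f : D.Ver X X'} {g : D.Ver Y Y'} (φ : D.Sq u f g u'),
    HEq (D.sqHComp φ (D.sqUId g)) φ
  sq_hassoc : ∀ {X Y Z W X' Y' Z' W'}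
    {u : D.Hor X Y} {v : D.Hor Y Z} {w : D.Hor Z W}
    {u' : D.Hor X' Y'} {v' : D.Hor Y' Z'} {w' : D.Hor Z' W'}
    {f : D.Ver X X'} {g : D.Ver Y Y'} {h : D.Ver Z Z'} {k : D.Ver W W'}
    (φ : D.Sq u f g u') (ψ : D.Sq v g h v') (χ : D.Sq w h k w'),
    HEq (D.sqHComp (D.sqHComp φ ψ) χ) (D.sqHComp φ (D.sqHComp ψ χ))
  sqUId_vid : ∀ X, D.sqUId (D.vid X) = D.sqId (D.hid X)
  sqUId_vcomp : ∀ {X X' X''} (f : D.Ver X X') (f' : D.Ver X' X''),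
    D.sqUId (D.vcomp f f') = D.sqVComp (D.sqUId f) (D.sqUId f')
  sqId_hcomp : ∀ {X Y Z} (u : D.Hor X Y) (v : D.Hor Y Z),
    D.sqId (D.hcomp u v) = D.sqHComp (D.sqId u) (D.sqId v)
  interchange : ∀ {X₁ Y₁ Z₁ X₂ Y₂ Z₂ X₃ Y₃ Z₃}
    {u₁ : D.Hor X₁ Y₁} {v₁ : D.Hor Y₁ Z₁} {u₂ : D.Hor X₂ Y₂} {v₂ : D.Hor Y₂ Z₂}
    {u₃ : D.Hor X₃ Y₃} {v₃ : D.Hor Y₃ Z₃}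
    {f₁ : D.Ver X₁ X₂} {g₁ : D.Ver Y₁ Y₂} {h₁ : D.Ver Z₁ Z₂}
    {f₂ : D.Ver X₂ X₃} {g₂ : D.Ver Y₂ Y₃} {h₂ : D.Ver Z₂ Z₃}
    (φ : D.Sq u₁ f₁ g₁ u₂) (ψ : D.Sq v₁ g₁ h₁ v₂)
    (φ' : D.Sq u₂ f₂ g₂ u₃) (ψ' : D.Sq v₂ g₂ h₂ v₃),
    D.sqVComp (D.sqHComp φ ψ) (D.sqHComp φ' ψ') =
      D.sqHComp (D.sqVComp φ φ') (D.sqVComp ψ ψ')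

namespace DoubleCatData

/-- Transport a square along an equality of its left vertical side. -/
def castL (D : DoubleCatData.{u}) {X Y X' Y' : D.Obj} {u : D.Hor X Y} {u' : D.Hor X' Y'}
    {f f' : D.Ver X X'} {g : D.Ver Y Y'} (h : f = f') (φ : D.Sq u f g u') : D.Sq u f' g u' :=
  h ▸ φ

/-- Transport a square along an equality of its right vertical side. -/
def castR (D : DoubleCatData.{u}) {X Y X' Y' : D.Obj} {u : D.Hor X Y} {u' : D.Hor X' Y'}
    {f : D.Ver X X'} {g g' : D.Ver Y Y'} (h : g = g') (φ : D.Sq u f g u') : D.Sq u f g' u' :=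
  h ▸ φ

/-- Transport a square along an equality of its top horizontal side. -/
def castTop (D : DoubleCatData.{u}) {X Y X' Y' : D.Obj} {u u₂ : D.Hor X Y} {u' : D.Hor X' Y'}
    {f : D.Ver X X'} {g : D.Ver Y Y'} (h : u = u₂) (φ : D.Sq u f g u') : D.Sq u₂ f g u' :=
  h ▸ φ

/-- Transport a square along an equality of its bottom horizontal side. -/
def castBot (D : DoubleCatData.{u}) {X Y X' Y' : D.Obj} {u : D.Hor X Y} {u' u₂ : D.Hor X' Y'}
    {f : D.Ver X X'} {g : D.Ver Y Y'} (h : u' = u₂) (φ : D.Sq u f g u') : D.Sq u f g u₂ :=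
  h ▸ φ

end DoubleCatData

/-- A companion of a vertical morphism `f : X → Y`: a horizontal arrow
`f̂ : X ⇸ Y` together with squares `q : U_X ⇒ f̂` over `(id_X, f)` and
`p : f̂ ⇒ U_Y` over `(f, id_Y)` whose vertical pasting is `U_f` and whose
horizontal pasting is the identity square of `f̂`. -/
structure Companion (D : DoubleCatData.{u}) {X Y : D.Obj} (f : D.Ver X Y) : Type u where
  hat : D.Hor X Y
  up : D.Sq (D.hid X) (D.vid X) f hat
  down : D.Sq hat f (D.vid Y) (D.hid Y)
  vert : HEq (D.sqVComp up down) (D.sqUId f)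
  horiz : HEq (D.sqHComp up down) (D.sqId hat)

/-- A conjoint of a vertical morphism `f : X → Y`: a horizontal arrow
`f̌ : Y ⇸ X` with the analogous squares on the other side. -/
structure Conjoint (D : DoubleCatData.{u}) {X Y : D.Obj} (f : D.Ver X Y) : Type u where
  check : D.Hor Y X
  up : D.Sq (D.hid X) f (D.vid X) check
  down : D.Sq check (D.vid Y) f (D.hid Y)
  vert : HEq (D.sqVComp up down) (D.sqUId f)
  horiz : HEq (D.sqHComp down up) (D.sqId check)

/-- A `(Set,Set)`-enriched double category: a vertical category `𝕍` and a lax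
functor `𝔼 : 𝕍×𝕍 → Set` into the double category of sets, functions and
commutative squares, assigning to a pair of objects the set `𝔼(X,Y)` of
horizontal arrows and to a pair of vertical morphisms a function
`𝔼(f,g) : 𝔼(X,Y) → 𝔼(X',Y')`, together with compatible units and an
associative unital composition. -/
structure SetEnrichedDC : Type (u + 1) where
  Obj : Type u
  Ver : Obj → Obj → Type u
  vid : ∀ X, Ver X X
  vcomp : ∀ {X Y Z}, Ver X Y → Ver Y Z → Ver X Z
  vid_comp : ∀ {X Y} (f : Ver X Y), vcomp (vid X) f = f
  vcomp_id : ∀ {X Y} (f : Ver X Y), vcomp f (vid Y) = f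
  vassoc : ∀ {W X Y Z} (f : Ver W X) (g : Ver X Y) (h : Ver Y Z),
    vcomp (vcomp f g) h = vcomp f (vcomp g h)
  Hor : Obj → Obj → Type u
  /-- the function `𝔼(f,g) : 𝔼(X,Y) → 𝔼(X',Y')` -/
  map : ∀ {X Y X' Y'}, Ver X X' → Ver Y Y' → Hor X Y → Hor X' Y'
  /-- laxness comparison `id → 𝔼(id,id)` (an equality, since `Set` squares are
  commutative squares) -/
  map_id : ∀ {X Y} (u : Hor X Y), map (vid X) (vid Y) u = u
  /-- laxness comparison `𝔼(f,g);𝔼(f',g') → 𝔼(f;f',g;g')` -/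
  map_comp : ∀ {X Y X' Y' X'' Y''} (f : Ver X X') (g : Ver Y Y')
    (f' : Ver X' X'') (g' : Ver Y' Y'') (u : Hor X Y),
    map (vcomp f f') (vcomp g g') u = map f' g' (map f g u)
  hid : ∀ X, Hor X X
  hcomp : ∀ {X Y Z}, Hor X Y → Hor Y Z → Hor X Z
  hid_comp : ∀ {X Y} (u : Hor X Y), hcomp (hid X) u = u
  hcomp_id : ∀ {X Y} (u : Hor X Y), hcomp u (hid Y) = u
  hassoc : ∀ {W X Y Z} (u : Hor W X) (v : Hor X Y) (w : Hor Y Z),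
    hcomp (hcomp u v) w = hcomp u (hcomp v w)
  /-- the units `U_X ∈ 𝔼(X,X)` are preserved: squares `U_f` -/
  map_hid : ∀ {X X'} (f : Ver X X'), map f f (hid X) = hid X'
  /-- the compositions are preserved: squares `⊙_{f,g,h}` -/
  map_hcomp : ∀ {X Y Z X' Y' Z'} (f : Ver X X') (g : Ver Y Y') (h : Ver Z Z')
    (u : Hor X Y) (v : Hor Y Z),
    map f h (hcomp u v) = hcomp (map f g u) (map g h v)

/-- The Grothendieck construction of a `(Set,Set)`-enriched double category:
a square from `u` to `v` over `(f,g)` is a witness that `𝔼(f,g)(u) = v`. -/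
def SetEnrichedDC.groth (S : SetEnrichedDC.{u}) : DoubleCatData.{u} where
  Obj := S.Obj
  Ver := S.Ver
  vid := S.vid
  vcomp := S.vcomp
  Hor := S.Hor
  hid := S.hid
  hcomp := S.hcomp
  Sq u f g v := ULift.{u} (PLift (S.map f g u = v))
  sqId u := ⟨⟨S.map_id u⟩⟩
  sqVComp {X Y X' Y' X'' Y''} {u u' u''} {f g f' g'} φ ψ :=
    ⟨⟨by rw [S.map_comp, φ.down.down, ψ.down.down]⟩⟩
  sqHComp {X Y Z X' Y' Z'} {u v u' v'} {f g h} φ ψ :=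
    ⟨⟨by rw [S.map_hcomp f g h, φ.down.down, ψ.down.down]⟩⟩
  sqUId f := ⟨⟨S.map_hid f⟩⟩

/-! STATEMENT 10: the Grothendieck construction of a `(Set,Set)`-enriched
double category is a double category in which every vertical morphism has a
companion and a conjoint, i.e. it is a framed bicategory (fibrant double
category). -/

instance (S : SetEnrichedDC.{u}) {X Y X' Y'} (u : S.Hor X Y) (f : S.Ver X X')
    (g : S.Ver Y Y') (v : S.Hor X' Y') : Subsingleton (S.groth.Sq u f g v) := by
  unfold SetEnrichedDC.groth
  infer_instance

theorem sq_heq (S : SetEnrichedDC.{u}) {X Y X' Y' : S.Obj}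
    {u u₂ : S.Hor X Y} {u' u₂' : S.Hor X' Y'} {f f₂ : S.Ver X X'} {g g₂ : S.Ver Y Y'}
    (hu : u = u₂) (hu' : u' = u₂') (hf : f = f₂) (hg : g = g₂)
    (φ : S.groth.Sq u f g u') (ψ : S.groth.Sq u₂ f₂ g₂ u₂') : HEq φ ψ := by
  subst hu hu' hf hg
  exact heq_of_eq (Subsingleton.elim _ _)

theorem setEnriched_groth_isFramed (S : SetEnrichedDC.{u}) :
    IsStrictDoubleCat S.groth ∧
    ∀ {X Y : S.Obj} (f : S.Ver X Y),
      Nonempty (Companion S.groth f) ∧ Nonempty (Conjoint S.groth f) := by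
  constructor
  · refine ⟨S.vid_comp, S.vcomp_id, S.vassoc, S.hid_comp, S.hcomp_id, S.hassoc,
      ?_, ?_, ?_, ?_, ?_, ?_, ?_, ?_, ?_, ?_⟩
    · intro _ _ _ _ _ _ _ _ φ
      exact sq_heq S rfl rfl (S.vid_comp _) (S.vid_comp _) _ φ
    · intro _ _ _ _ _ _ _ _ φ
      exact sq_heq S rfl rfl (S.vcomp_id _) (S.vcomp_id _) _ φ
    · intro _ _ _ _ _ _ _ _ _ _ _ _ _ _ _ _ _ _ φ ψ χ
      exact sq_heq S rfl rfl (S.vassoc _ _ _) (S.vassoc _ _ _) _ _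
    · intro _ _ _ _ _ _ _ _ φ
      exact sq_heq S (S.hid_comp _) (S.hid_comp _) rfl rfl _ φ
    · intro _ _ _ _ _ _ _ _ φ
      exact sq_heq S (S.hcomp_id _) (S.hcomp_id _) rfl rfl _ φ
    · intro _ _ _ _ _ _ _ _ _ _ _ _ _ _ _ _ _ _ φ ψ χ
      exact sq_heq S (S.hassoc _ _ _) (S.hassoc _ _ _) rfl rfl _ _
    · intro X; exact eq_of_heq (sq_heq S rfl rfl rfl rfl _ _)
    · intro _ _ _ _ _; exact eq_of_heq (sq_heq S rfl rfl rfl rfl _ _)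
    · intro _ _ _ _ _; exact eq_of_heq (sq_heq S rfl rfl rfl rfl _ _)
    · intro _ _ _ _ _ _ _ _ _ _ _ _ _ _ _ _ _ _ _ _ _ φ ψ φ' ψ'
      exact eq_of_heq (sq_heq S rfl rfl rfl rfl _ _)
  · intro X Y f
    constructor
    · refine ⟨⟨S.map (S.vid X) f (S.hid X), ⟨⟨rfl⟩⟩, ⟨⟨show S.map f (S.vid Y) _ = S.hid Y from ?_⟩⟩, ?_, ?_⟩⟩
      · rw [← S.map_comp, S.vid_comp, S.vcomp_id, S.map_hid]
      · exact sq_heq S rfl rfl (S.vid_comp f) (S.vcomp_id f) _ _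
      · exact sq_heq S (S.hid_comp _) (S.hcomp_id _) rfl rfl _ _
    · refine ⟨⟨S.map f (S.vid X) (S.hid X), ⟨⟨rfl⟩⟩, ⟨⟨show S.map (S.vid Y) f _ = S.hid Y from ?_⟩⟩, ?_, ?_⟩⟩
      · rw [← S.map_comp, S.vcomp_id, S.vid_comp, S.map_hid]
      · exact sq_heq S rfl rfl (S.vcomp_id f) (S.vid_comp f) _ _
      · exact sq_heq S (S.hcomp_id _) (S.hid_comp _) rfl rfl _ _
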